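/- Let a, b, c be real numbers with a² + b² + c² = 1, let ϑ be a real number with sin ϑ ≠ 0, and set k = (1 - cos ϑ)/sin ϑ. Then (1 - k•U₃(a,b,c))⁻¹ * (1 + k•U₃(a,b,c)) = 1 + sin ϑ • U₃(a,b,c) + (1 - cos ϑ) • U₃(a,b,c)²; that is, the Cayley transform of -kU₃ is the rotation by angle ϑ about the axis (a,b,c). -/

import Mathlib

/-- The 3×3 real antisymmetric matrix `U₃(a,b,c)`. -/
def U₃ (a b c : ℝ) : Matrix (Fin 3) (Fin 3) ℝ := !![0, -c, b; c, 0, -a; -b, a, 0]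

/-- For `a² + b² + c² = 1`, `sin ϑ ≠ 0` and `k = (1 - cos ϑ)/sin ϑ`, the Cayley transform
of `-kU₃(a,b,c)` is the rotation by angle `ϑ` about the axis `(a,b,c)`:
`(1 - k•U₃)⁻¹ * (1 + k•U₃) = 1 + sin ϑ • U₃ + (1 - cos ϑ) • U₃²`. -/
theorem cayley_U₃_eq_rotation (a b c : ℝ) (h : a ^ 2 + b ^ 2 + c ^ 2 = 1)
    (ϑ : ℝ) (hs : Real.sin ϑ ≠ 0) (k : ℝ) (hk : k = (1 - Real.cos ϑ) / Real.sin ϑ) :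
    (1 - k • U₃ a b c)⁻¹ * (1 + k • U₃ a b c)
      = 1 + Real.sin ϑ • U₃ a b c + (1 - Real.cos ϑ) • (U₃ a b c) ^ 2 := by
  have hpy := Real.sin_sq_add_cos_sq ϑ
  have hU3 : U₃ a b c ^ 3 = -(U₃ a b c) := by
    ext i j
    fin_cases i <;> fin_cases j <;>
      simp [U₃, pow_succ, Matrix.mul_apply, Fin.sum_univ_three] <;>
      first
        | linear_combination c * h
        | linear_combination (-c) * h
        | linear_combination b * h
        | linear_combination (-b) * h
        | linear_combination a * h
        | linear_combination (-a) * h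
        | nlinarith [h, sq_nonneg (a+b), sq_nonneg (a-b)]
  have hdet : IsUnit (1 - k • U₃ a b c).det := by
    have hd : (1 - k • U₃ a b c).det = 1 + k^2 * (a^2+b^2+c^2) := by
      simp [U₃, Matrix.det_fin_three, Matrix.one_apply]; ring
    rw [hd, h]
    have : (0:ℝ) < 1 + k^2 * 1 := by positivity
    exact (isUnit_iff_ne_zero).2 (ne_of_gt this)
  set A := U₃ a b c with hA
  clear_value A
  have hU3' : A * (A * A) = -A := by rw [← hU3, pow_succ', sq]
  have key : (1 - k • A) * (1 + Real.sin ϑ • A + (1 - Real.cos ϑ) • A ^ 2)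
      = 1 + k • A := by
    have expand : (1 - k • A) * (1 + Real.sin ϑ • A + (1 - Real.cos ϑ) • A ^ 2)
        = 1 + Real.sin ϑ • A + (1 - Real.cos ϑ) • (A * A) - k • A
          - (k * Real.sin ϑ) • (A * A) - (k * (1 - Real.cos ϑ)) • (A * (A * A)) := by
      rw [sq]; noncomm_ring
      match_scalars <;> (try simp only [neg_smul, one_smul, smul_eq_mul]) <;> ring
    rw [expand, hU3']
    match_scalars <;>
      first
        | ring1
        | (rw [hk]; field_simp; done)
        | (rw [hk]; field_simp; linear_combination hpy)
        | (rw [hk]; field_simp; ring1)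
  rw [← key, ← Matrix.mul_assoc, Matrix.nonsing_inv_mul _ hdet, Matrix.one_mul]
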